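/- Let G = (V, E) be a finite directed graph and v_0 ∈ V. Define the ground STRIPS planning problem with atoms at(v), clear(v), visited(v) for v ∈ V; initial state s_0 = {at(v_0), visited(v_0)} ∪ {clear(v) : v ∈ V, v ≠ v_0}; for each edge (u, v) ∈ E a ground action move(u, v) with pre = {at(u), clear(v)}, add = {at(v), visited(v)}, del = {at(u), clear(v)}; and goal g = {visited(v) : v ∈ V}. Then this planning problem has a plan if and only if G has a Hamiltonian path starting at v_0 (a path visiting every vertex of G exactly once). -/

import Mathlib

/-- A ground STRIPS action: a triple of sets of atoms. -/
structure GAct (α : Type*) where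
  pre : Set α
  add : Set α
  del : Set α

/-- The successor state of `s` under action `a` (when `a` is applicable, i.e. `a.pre ⊆ s`). -/
def gsucc {α : Type*} (s : Set α) (a : GAct α) : Set α :=
  (s \ a.del) ∪ a.add

/-- Final state after applying a sequence of actions. -/
def succList {α : Type*} : Set α → List (GAct α) → Set α
  | s, [] => s
  | s, a :: l => succList (gsucc s a) l

/-- The action sequence is applicable from `s`:
each action is applicable in the successively progressed state. -/
def AppList {α : Type*} : Set α → List (GAct α) → Prop
  | _, [] => True
  | s, a :: l => a.pre ⊆ s ∧ AppList (gsucc s a) l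

/-- Atoms of the Hamiltonian-path planning problem: `at(v)`, `clear(v)`, `visited(v)`. -/
inductive HAtom (V : Type*) where
  | atV (v : V)
  | clear (v : V)
  | visited (v : V)

/-- The ground action `move(u, v)` with `pre = {at(u), clear(v)}`,
`add = {at(v), visited(v)}`, `del = {at(u), clear(v)}`. -/
def move {V : Type*} (u v : V) : GAct (HAtom V) :=
  ⟨{HAtom.atV u, HAtom.clear v}, {HAtom.atV v, HAtom.visited v}, {HAtom.atV u, HAtom.clear v}⟩

/-- The initial state `s₀ = {at(v₀), visited(v₀)} ∪ {clear(v) : v ≠ v₀}`. -/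
def hamInit {V : Type*} (v₀ : V) : Set (HAtom V) :=
  {HAtom.atV v₀, HAtom.visited v₀} ∪ HAtom.clear '' {v | v ≠ v₀}

-- Auxiliary definitions and lemmas

/-- The state corresponding to having visited the vertices in `p` and being at `cur`. -/
def St {V : Type*} (p : List V) (cur : V) : Set (HAtom V) :=
  {HAtom.atV cur} ∪ HAtom.visited '' {v | v ∈ p} ∪ HAtom.clear '' {v | v ∉ p}

lemma hamInit_eq {V : Type*} (v₀ : V) : hamInit v₀ = St [v₀] v₀ := by
  ext x; cases x <;> simp [hamInit, St]

lemma atV_mem {V : Type*} (p : List V) (cur u : V) : HAtom.atV u ∈ St p cur ↔ u = cur := by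
  simp [St]

lemma clear_mem {V : Type*} (p : List V) (cur v : V) : HAtom.clear v ∈ St p cur ↔ v ∉ p := by
  simp [St]

lemma visited_mem {V : Type*} (p : List V) (cur v : V) : HAtom.visited v ∈ St p cur ↔ v ∈ p := by
  simp [St]

lemma gsucc_move {V : Type*} (p : List V) (cur v : V) :
    gsucc (St p cur) (move cur v) = St (p ++ [v]) v := by
  ext x; cases x <;> simp [gsucc, move, St] <;> tauto

lemma fwd {V : Type*} (E : V → V → Prop) :
    ∀ (l : List (GAct (HAtom V))) (p : List V) (cur : V),
    (∀ a ∈ l, ∃ u v, E u v ∧ a = move u v) →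
    AppList (St p cur) l → p.Nodup →
    ∃ q : List V, List.Chain E cur q ∧ (p ++ q).Nodup ∧
      ∀ v, HAtom.visited v ∈ succList (St p cur) l → v ∈ p ++ q := by
  intro l
  induction l with
  | nil =>
    intro p cur _ _ hnd
    exact ⟨[], List.Chain.nil, by simpa using hnd, fun v hv => by
      simpa using (visited_mem p cur v).1 (by simpa [succList] using hv)⟩
  | cons a l ih =>
    intro p cur hmv happ hnd
    obtain ⟨u, v, hE, rfl⟩ := hmv a (by simp)
    obtain ⟨hpre, happ'⟩ := happ
    have hu : u = cur := (atV_mem p cur u).1 (hpre (by simp [move]))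
    have hv : v ∉ p := (clear_mem p cur v).1 (hpre (by simp [move]))
    subst hu
    rw [gsucc_move] at happ'
    have hnd' : (p ++ [v]).Nodup := by
      simp [List.nodup_append, hnd, hv]; intro a ha h; exact hv (h ▸ ha)
    obtain ⟨q, hchain, hndq, hmem⟩ := ih (p ++ [v]) v (fun a ha => hmv a (by simp [ha])) happ' hnd'
    refine ⟨v :: q, List.Chain.cons hE hchain, by simpa using hndq, ?_⟩
    intro w hw
    have := hmem w (by simpa [succList, gsucc_move] using hw)
    simpa using this

/-- The plan following the vertex list `vs` from `cur`. -/
def hplan {V : Type*} : V → List V → List (GAct (HAtom V))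
  | _, [] => []
  | cur, v :: vs => move cur v :: hplan v vs

lemma hplan_edges {V : Type*} (E : V → V → Prop) :
    ∀ (vs : List V) (cur : V), List.Chain E cur vs →
    ∀ a ∈ hplan cur vs, ∃ u v, E u v ∧ a = move u v := by
  intro vs
  induction vs with
  | nil => intro cur _ a ha; simp [hplan] at ha
  | cons v vs ih =>
    intro cur hc a ha
    rcases List.chain_cons.1 hc with ⟨hE, hc'⟩
    rcases (by simpa [hplan] using ha : a = move cur v ∨ a ∈ hplan v vs) with rfl | h
    · exact ⟨cur, v, hE, rfl⟩
    · exact ih v hc' a h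

lemma bwd {V : Type*} (E : V → V → Prop) :
    ∀ (vs p : List V) (cur : V), List.Chain E cur vs → (∀ v ∈ vs, v ∉ p) → vs.Nodup →
    AppList (St p cur) (hplan cur vs) ∧
      ∀ v, v ∈ p ++ vs → HAtom.visited v ∈ succList (St p cur) (hplan cur vs) := by
  intro vs
  induction vs with
  | nil =>
    intro p cur _ _ _
    exact ⟨trivial, fun v hv => (visited_mem p cur v).2 (by simpa using hv)⟩
  | cons v vs ih =>
    intro p cur hc hnotin hnd
    rcases List.chain_cons.1 hc with ⟨hE, hc'⟩
    have hv : v ∉ p := hnotin v (by simp)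
    have h1 : ∀ w ∈ vs, w ∉ p ++ [v] := by
      intro w hw
      simp only [List.mem_append, List.mem_singleton]
      rintro (h | rfl)
      · exact hnotin w (by simp [hw]) h
      · exact (List.nodup_cons.1 hnd).1 hw
    obtain ⟨happ, hmem⟩ := ih (p ++ [v]) v hc' h1 (List.nodup_cons.1 hnd).2
    constructor
    · refine ⟨?_, ?_⟩
      · intro x hx
        rcases (by simpa [move] using hx : x = HAtom.atV cur ∨ x = HAtom.clear v) with rfl | rfl
        · exact (atV_mem p cur cur).2 rfl
        · exact (clear_mem p cur v).2 hv
      · simpa [hplan, gsucc_move] using happ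
    · intro w hw
      have : w ∈ (p ++ [v]) ++ vs := by simpa using hw
      simpa [succList, hplan, gsucc_move] using hmem w this

/-- The planning problem encoding of the Hamiltonian path problem: for a finite directed graph
`(V, E)` and start vertex `v₀`, there is a plan (a sequence of `move` actions along edges,
applicable from `s₀`, whose final state contains the goal `{visited(v) : v ∈ V}`) iff `G` has
a Hamiltonian path starting at `v₀` (a sequence of distinct vertices starting at `v₀`,
enumerating all of `V`, with consecutive vertices joined by edges). -/
theorem stmt10 {V : Type*} [Finite V] (E : V → V → Prop) (v₀ : V) :
    (∃ l : List (GAct (HAtom V)),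
        (∀ a ∈ l, ∃ u v, E u v ∧ a = move u v) ∧
        AppList (hamInit v₀) l ∧
        Set.range (HAtom.visited : V → HAtom V) ⊆ succList (hamInit v₀) l) ↔
    (∃ vs : List V, (v₀ :: vs).Nodup ∧ (∀ v : V, v ∈ v₀ :: vs) ∧ List.Chain E v₀ vs) := by
  constructor
  · rintro ⟨l, hmv, happ, hgoal⟩
    rw [hamInit_eq] at happ hgoal
    obtain ⟨q, hchain, hnd, hmem⟩ := fwd E l [v₀] v₀ hmv happ (by simp)
    refine ⟨q, by simpa using hnd, ?_, hchain⟩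
    intro v
    have := hmem v (hgoal ⟨v, rfl⟩)
    simpa using this
  · rintro ⟨vs, hnd, hall, hchain⟩
    obtain ⟨happ, hmem⟩ := bwd E vs [v₀] v₀ hchain
      (fun v hv => by simp; rintro rfl; exact (List.nodup_cons.1 hnd).1 hv)
      (List.nodup_cons.1 hnd).2
    refine ⟨hplan v₀ vs, hplan_edges E vs v₀ hchain, ?_, ?_⟩
    · rw [hamInit_eq]; exact happ
    · rw [hamInit_eq]
      rintro x ⟨v, rfl⟩
      exact hmem v (by simpa using hall v)
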